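/- Fix a prime number p. Let k > 0 be an integer and let n_1, ..., n_{k-1} be positive integers. Choose an integer r > 0 with p^r > n_1 + ... + n_{k-1}, and set n_k = p^r − (n_1 + ... + n_{k-1}). Then there exist a finite p-group P, a subgroup Q ≤ P, and an irreducible character ψ ∈ Irr(P) such that the restriction ψ_Q decomposes as ψ_Q = Σ_{i=1}^{k} n_i φ_i, where φ_1, ..., φ_k are pairwise distinct irreducible characters of Q and n_i = (ψ_Q, φ_i) for each i; in particular, ψ_Q has exactly k distinct irreducible constituents with the prescribed multiplicities n_1, ..., n_k. -/

import Mathlib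

/-- `χ : G → ℂ` is a (complex) character of `G`: the trace function of some
finite-dimensional complex representation of `G`. -/
def IsChar (G : Type*) [Group G] (χ : G → ℂ) : Prop :=
  ∃ (n : ℕ) (ρ : Representation ℂ G (Fin n → ℂ)),
    ∀ g : G, χ g = LinearMap.trace ℂ (Fin n → ℂ) (ρ g)

/-- The usual inner product of class functions on a finite group. -/
noncomputable def cInner (G : Type*) [Group G] [Finite G] (χ φ : G → ℂ) : ℂ :=
  (Nat.card G : ℂ)⁻¹ * ∑ᶠ g : G, χ g * (starRingEnd ℂ) (φ g)

/-- `χ` is an irreducible character of the finite group `G`. -/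
def IsIrrChar (G : Type*) [Group G] [Finite G] (χ : G → ℂ) : Prop :=
  IsChar G χ ∧ cInner G χ χ = 1

open scoped Classical in
/-- The induced character `χ^G` of a character `χ` of a subgroup `H ≤ G`. -/
noncomputable def inducedChar {G : Type*} [Group G] [Finite G]
    (H : Subgroup G) (χ : ↥H → ℂ) : G → ℂ :=
  fun g => (Nat.card H : ℂ)⁻¹ *
    ∑ᶠ x : G, if h : x⁻¹ * g * x ∈ H then χ ⟨x⁻¹ * g * x, h⟩ else 0


/-! ### Auxiliary construction -/


open Finset

noncomputable def zetaC (M : ℕ) : ℂ := Complex.exp (2 * Real.pi * Complex.I / M)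

lemma zetaC_prim (M : ℕ) [NeZero M] : IsPrimitiveRoot (zetaC M) M :=
  Complex.isPrimitiveRoot_exp M (NeZero.ne M)

lemma zetaC_pow_self (M : ℕ) [NeZero M] : zetaC M ^ M = 1 := (zetaC_prim M).pow_eq_one

lemma zetaC_pow_mod (M : ℕ) [NeZero M] (x : ℕ) : zetaC M ^ (x % M) = zetaC M ^ x := by
  conv_rhs => rw [← Nat.div_add_mod x M]
  rw [pow_add, pow_mul, zetaC_pow_self, one_pow, one_mul]

lemma conj_zetaC (M : ℕ) : (starRingEnd ℂ) (zetaC M) = (zetaC M)⁻¹ := by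
  rw [zetaC, ← Complex.exp_conj, ← Complex.exp_neg]
  congr 1
  simp [map_div₀, map_ofNat]
  ring

noncomputable def epsC (M : ℕ) : ZMod M → ℂ := fun a => zetaC M ^ a.val

lemma epsC_natCast (M : ℕ) [NeZero M] (x : ℕ) : epsC M (x : ZMod M) = zetaC M ^ x := by
  rw [epsC, ZMod.val_natCast, zetaC_pow_mod]

lemma epsC_zero (M : ℕ) [NeZero M] : epsC M 0 = 1 := by
  simp [epsC, ZMod.val_zero]

lemma epsC_add (M : ℕ) [NeZero M] (a b : ZMod M) : epsC M (a + b) = epsC M a * epsC M b := by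
  rw [epsC, ZMod.val_add, zetaC_pow_mod, pow_add]; rfl

lemma epsC_sum (M : ℕ) [NeZero M] {ι : Type*} (s : Finset ι) (f : ι → ZMod M) :
    epsC M (∑ i ∈ s, f i) = ∏ i ∈ s, epsC M (f i) := by
  classical
  induction s using Finset.induction with
  | empty => simp [epsC_zero]
  | @insert _ _ h ih => rw [Finset.sum_insert h, Finset.prod_insert h, epsC_add, ih]

lemma epsC_neg (M : ℕ) [NeZero M] (a : ZMod M) : epsC M (-a) = (epsC M a)⁻¹ := by
  have h : epsC M a * epsC M (-a) = 1 := by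
    rw [← epsC_add, add_neg_cancel, epsC_zero]
  exact eq_inv_of_mul_eq_one_right (by linear_combination h)

lemma conj_epsC (M : ℕ) [NeZero M] (a : ZMod M) :
    (starRingEnd ℂ) (epsC M a) = epsC M (-a) := by
  rw [epsC_neg, epsC, map_pow, conj_zetaC, inv_pow]

lemma epsC_mul_conj (M : ℕ) [NeZero M] (a : ZMod M) :
    epsC M a * (starRingEnd ℂ) (epsC M a) = 1 := by
  rw [conj_epsC, ← epsC_add, add_neg_cancel, epsC_zero]

lemma epsC_ne_one (M : ℕ) [NeZero M] {a : ZMod M} (h : a ≠ 0) : epsC M a ≠ 1 := by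
  have h1 : 0 < a.val := Nat.pos_of_ne_zero (fun hh => h ((ZMod.val_eq_zero a).mp hh))
  exact (zetaC_prim M).pow_ne_one_of_pos_of_lt h1.ne' (ZMod.val_lt a)

lemma sum_epsC (M : ℕ) [NeZero M] (t : ZMod M) :
    ∑ a : ZMod M, epsC M (t * a) = if t = 0 then (M : ℂ) else 0 := by
  by_cases ht : t = 0
  · simp [ht, epsC_zero, ZMod.card]
  · simp only [ht, if_false]
    have key : epsC M t * ∑ a : ZMod M, epsC M (t * a) = ∑ a : ZMod M, epsC M (t * a) := by
      rw [Finset.mul_sum]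
      refine Fintype.sum_equiv (Equiv.addLeft 1) _ _ (fun a => ?_)
      rw [← epsC_add, ← mul_one_add]
      rfl
    have h2 : (epsC M t - 1) * ∑ a : ZMod M, epsC M (t * a) = 0 := by linear_combination key
    have h4 : epsC M t ≠ 1 := epsC_ne_one M ht
    rcases mul_eq_zero.mp h2 with h3 | h3
    · exact absurd (by linear_combination h3) h4
    · exact h3

lemma sum_pi_epsC (M : ℕ) [NeZero M] {ι : Type*} [Fintype ι] [DecidableEq ι] (w : ι → ZMod M) :
    ∑ f : ι → ZMod M, epsC M (∑ x, w x * f x)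
      = if w = 0 then ((M : ℂ) ^ Fintype.card ι) else 0 := by
  have h1 : ∑ f : ι → ZMod M, epsC M (∑ x, w x * f x)
      = ∏ x : ι, ∑ a : ZMod M, epsC M (w x * a) := by
    rw [Finset.prod_univ_sum]
    rw [Fintype.piFinset_univ]
    exact Finset.sum_congr rfl fun f _ => epsC_sum M _ _
  rw [h1]
  by_cases hw : w = 0
  · simp [hw, sum_epsC, Finset.prod_const, ZMod.card, epsC_zero]
  · simp only [hw, if_false]
    obtain ⟨x0, hx0⟩ : ∃ x, w x ≠ 0 := by
      by_contra hc
      push_neg at hc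
      exact hw (funext hc)
    refine Finset.prod_eq_zero (Finset.mem_univ x0) ?_
    rw [sum_epsC]
    simp [hx0]

open Finset

@[ext]
structure GrpP (q N : ℕ) where
  f : ZMod q → ZMod N
  s : ZMod q

namespace GrpP
variable {q N : ℕ}

instance : Mul (GrpP q N) := ⟨fun a b => ⟨a.f + fun x => b.f (x + a.s), a.s + b.s⟩⟩
instance : One (GrpP q N) := ⟨⟨0, 0⟩⟩
instance : Inv (GrpP q N) := ⟨fun a => ⟨fun x => -(a.f (x - a.s)), -a.s⟩⟩

@[simp] lemma mul_f (a b : GrpP q N) : (a * b).f = a.f + fun x => b.f (x + a.s) := rfl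
@[simp] lemma mul_s (a b : GrpP q N) : (a * b).s = a.s + b.s := rfl
@[simp] lemma one_f : (1 : GrpP q N).f = 0 := rfl
@[simp] lemma one_s : (1 : GrpP q N).s = 0 := rfl
@[simp] lemma inv_f (a : GrpP q N) : (a⁻¹).f = fun x => -(a.f (x - a.s)) := rfl
@[simp] lemma inv_s (a : GrpP q N) : (a⁻¹).s = -a.s := rfl

instance : Group (GrpP q N) where
  mul_assoc a b c := by
    ext x
    · show a.f x + b.f (x + a.s) + c.f (x + (a.s + b.s))
        = a.f x + (b.f (x + a.s) + c.f ((x + a.s) + b.s))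
      rw [add_assoc]
      ring_nf
    · exact add_assoc _ _ _
  one_mul a := by ext x <;> simp
  mul_one a := by ext x <;> simp
  inv_mul_cancel a := by
    ext x
    · show -(a.f (x - a.s)) + a.f (x + -a.s) = 0
      rw [← sub_eq_add_neg]
      ring
    · exact neg_add_cancel _

def gEquiv : GrpP q N ≃ (ZMod q → ZMod N) × ZMod q where
  toFun g := (g.f, g.s)
  invFun p := ⟨p.1, p.2⟩
  left_inv _ := rfl
  right_inv _ := rfl

noncomputable instance [NeZero q] [NeZero N] : Fintype (GrpP q N) :=
  Fintype.ofEquiv _ gEquiv.symm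

lemma card_grpP [NeZero q] [NeZero N] : Nat.card (GrpP q N) = N ^ q * q := by
  rw [Nat.card_eq_fintype_card, Fintype.card_congr gEquiv, Fintype.card_prod,
    Fintype.card_fun, ZMod.card, ZMod.card]

end GrpP

section Rep
open Finset
variable (q N : ℕ) [NeZero q] [NeZero N]

def jmF (τ : ZMod q) : Fin q := ⟨τ.val, ZMod.val_lt τ⟩
def zmF (j : Fin q) : ZMod q := ((j : ℕ) : ZMod q)

lemma zm_jm (τ : ZMod q) : zmF q (jmF q τ) = τ := by
  simp [zmF, jmF, ZMod.natCast_val, ZMod.cast_id]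

lemma jm_zm (j : Fin q) : jmF q (zmF q j) = j := by
  apply Fin.ext
  simp [zmF, jmF, ZMod.val_natCast_of_lt j.isLt]

def finzEquiv : Fin q ≃ ZMod q := ⟨zmF q, jmF q, jm_zm q, zm_jm q⟩

variable (cc : ZMod q → ZMod N)

noncomputable def rhoMap (g : GrpP q N) : (Fin q → ℂ) →ₗ[ℂ] (Fin q → ℂ) where
  toFun v := fun j => epsC N (∑ x, cc (x + zmF q j) * g.f x) * v (jmF q (zmF q j - g.s))
  map_add' u v := by funext j; simp [mul_add]
  map_smul' c v := by
    funext j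
    simp only [Pi.smul_apply, smul_eq_mul, RingHom.id_apply]
    ring

lemma rhoMap_apply (g : GrpP q N) (v : Fin q → ℂ) (j : Fin q) :
    rhoMap q N cc g v j
      = epsC N (∑ x, cc (x + zmF q j) * g.f x) * v (jmF q (zmF q j - g.s)) := rfl

noncomputable def rhoF : Representation ℂ (GrpP q N) (Fin q → ℂ) where
  toFun := rhoMap q N cc
  map_one' := by
    apply LinearMap.ext; intro v; funext j
    rw [rhoMap_apply]
    simp [epsC_zero, jm_zm]
  map_mul' g₁ g₂ := by
    apply LinearMap.ext; intro v; funext j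
    rw [Module.End.mul_apply, rhoMap_apply, rhoMap_apply, rhoMap_apply]
    rw [zm_jm]
    have h1 : ∑ x, cc (x + zmF q j) * (g₁ * g₂).f x
        = (∑ x, cc (x + zmF q j) * g₁.f x)
          + ∑ x, cc (x + (zmF q j - g₁.s)) * g₂.f x := by
      rw [GrpP.mul_f]
      simp only [Pi.add_apply, mul_add]
      rw [Finset.sum_add_distrib]
      congr 1
      refine Fintype.sum_equiv (Equiv.addRight g₁.s) _ _ (fun x => ?_)
      have hx : x + g₁.s + (zmF q j - g₁.s) = x + zmF q j := by ring
      simp only [Equiv.coe_addRight, hx]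
    rw [h1, epsC_add, GrpP.mul_s, ← sub_sub]
    ring

open scoped Classical in
noncomputable def psiF : GrpP q N → ℂ := fun g =>
  if g.s = 0 then ∑ τ : ZMod q, epsC N (∑ x, cc (x + τ) * g.f x) else 0

lemma trace_pi {ι : Type*} [Fintype ι] [DecidableEq ι] (L : (ι → ℂ) →ₗ[ℂ] (ι → ℂ)) :
    LinearMap.trace ℂ (ι → ℂ) L = ∑ j, L (Pi.single j 1) j := by
  rw [LinearMap.trace_eq_matrix_trace ℂ (Pi.basisFun ℂ ι), Matrix.trace]
  refine Finset.sum_congr rfl fun j _ => ?_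
  rw [Matrix.diag_apply, LinearMap.toMatrix_apply, Pi.basisFun_apply, Pi.basisFun_repr]

lemma trace_rho (g : GrpP q N) :
    LinearMap.trace ℂ (Fin q → ℂ) (rhoF q N cc g) = psiF q N cc g := by
  classical
  have : rhoF q N cc g = rhoMap q N cc g := rfl
  rw [this, trace_pi]
  have hterm : ∀ j : Fin q, rhoMap q N cc g (Pi.single j 1) j
      = if g.s = 0 then epsC N (∑ x, cc (x + zmF q j) * g.f x) else 0 := by
    intro j
    rw [rhoMap_apply, Pi.single_apply]
    by_cases hs : g.s = 0
    · rw [hs, sub_zero, jm_zm]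
      simp
    · have : jmF q (zmF q j - g.s) ≠ j := by
        intro hEq
        apply hs
        have := congrArg (zmF q) hEq
        rw [zm_jm] at this
        have h2 : zmF q j - g.s = zmF q j := this
        have := sub_eq_self.mp h2
        exact this
      simp [this, hs]
  rw [Finset.sum_congr rfl fun j _ => hterm j]
  by_cases hs : g.s = 0
  · simp only [hs, if_true, psiF]
    refine Fintype.sum_equiv (finzEquiv q) _ _ (fun j => ?_)
    rfl
  · simp [hs, psiF]

lemma isChar_psi : IsChar (GrpP q N) (psiF q N cc) :=
  ⟨q, rhoF q N cc, fun g => (trace_rho q N cc g).symm⟩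

end Rep

section Irred
open Finset
variable (q N : ℕ) [NeZero q] [NeZero N] (cc : ZMod q → ZMod N)

lemma cinner_psi (hcc : Function.Injective cc) :
    cInner (GrpP q N) (psiF q N cc) (psiF q N cc) = 1 := by
  classical
  rw [cInner, finsum_eq_sum_of_fintype]
  set F : (ZMod q → ZMod N) → ℂ := fun f =>
    ∑ τ : ZMod q, ∑ τ' : ZMod q, epsC N (∑ x, (cc (x + τ) - cc (x + τ')) * f x) with hF
  have hstep1 : ∀ g : GrpP q N,
      psiF q N cc g * (starRingEnd ℂ) (psiF q N cc g)
        = if g.s = 0 then F g.f else 0 := by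
    intro g
    by_cases hs : g.s = 0
    · simp only [psiF, hs, if_true, hF]
      rw [map_sum, Finset.sum_mul_sum]
      refine Finset.sum_congr rfl fun τ _ => Finset.sum_congr rfl fun τ' _ => ?_
      rw [conj_epsC, ← epsC_add, ← sub_eq_add_neg, ← Finset.sum_sub_distrib]
      congr 1
      exact Finset.sum_congr rfl fun x _ => by ring
    · simp [psiF, hs]
  rw [Finset.sum_congr rfl fun g _ => hstep1 g]
  have hstep2 : ∑ g : GrpP q N, (if g.s = 0 then F g.f else 0)
      = ∑ f : ZMod q → ZMod N, F f := by
    rw [← Equiv.sum_comp GrpP.gEquiv.symm (fun g : GrpP q N => if g.s = 0 then F g.f else 0)]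
    rw [Fintype.sum_prod_type]
    refine Finset.sum_congr rfl fun f _ => ?_
    have : ∀ s : ZMod q,
        (if (GrpP.gEquiv.symm (f, s)).s = 0 then F (GrpP.gEquiv.symm (f, s)).f else 0)
          = if s = 0 then F f else 0 := fun s => rfl
    rw [Finset.sum_congr rfl fun s _ => this s, Finset.sum_ite_eq' Finset.univ 0 (fun _ => F f)]
    simp
  rw [hstep2]
  have hswap : ∑ f : ZMod q → ZMod N, F f
      = ∑ τ : ZMod q, ∑ τ' : ZMod q, ∑ f : ZMod q → ZMod N,
          epsC N (∑ x, (cc (x + τ) - cc (x + τ')) * f x) := by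
    rw [hF]
    rw [Finset.sum_comm]
    exact Finset.sum_congr rfl fun τ _ => Finset.sum_comm
  rw [hswap]
  have hinner : ∀ τ τ' : ZMod q,
      (∑ f : ZMod q → ZMod N, epsC N (∑ x, (cc (x + τ) - cc (x + τ')) * f x))
        = if τ = τ' then ((N : ℂ) ^ q) else 0 := by
    intro τ τ'
    rw [sum_pi_epsC]
    have hcond : ((fun x => cc (x + τ) - cc (x + τ')) = 0) ↔ τ = τ' := by
      constructor
      · intro h
        have h0 := congrFun h 0
        rw [zero_add, zero_add] at h0
        exact hcc (sub_eq_zero.mp h0)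
      · rintro rfl; funext x; simp
    by_cases h : τ = τ'
    · rw [if_pos (hcond.mpr h), if_pos h, ZMod.card]
    · rw [if_neg (fun hh => h (hcond.mp hh)), if_neg h]
  rw [Finset.sum_congr rfl fun τ _ => Finset.sum_congr rfl fun τ' _ => hinner τ τ']
  have : ∀ τ : ZMod q, (∑ τ' : ZMod q, if τ = τ' then ((N:ℂ)^q) else 0) = (N:ℂ)^q := by
    intro τ
    rw [Finset.sum_ite_eq Finset.univ τ (fun _ => (N:ℂ)^q)]
    simp
  rw [Finset.sum_congr rfl fun τ _ => this τ, Finset.sum_const, GrpP.card_grpP]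
  have hN : ((N:ℕ):ℂ) ≠ 0 := Nat.cast_ne_zero.mpr (NeZero.ne N)
  have hq : ((q:ℕ):ℂ) ≠ 0 := Nat.cast_ne_zero.mpr (NeZero.ne q)
  rw [Finset.card_univ, ZMod.card, nsmul_eq_mul]
  push_cast
  field_simp

lemma isIrrChar_psi (hcc : Function.Injective cc) :
    IsIrrChar (GrpP q N) (psiF q N cc) :=
  ⟨isChar_psi q N cc, cinner_psi q N cc hcc⟩

end Irred

section QSide
open Finset
variable (q : ℕ) [NeZero q]

instance : NeZero (q ^ 2) := ⟨pow_ne_zero 2 (NeZero.ne q)⟩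

lemma natCast_val_self (u : ZMod q) : ((u.val : ℕ) : ZMod q) = u := by
  rw [ZMod.natCast_val, ZMod.cast_id]

def iota0 : ZMod q → ZMod (q ^ 2) := fun u => ((q * u.val : ℕ) : ZMod (q ^ 2))

lemma iota0_add (u v : ZMod q) : iota0 q (u + v) = iota0 q u + iota0 q v := by
  rw [iota0, iota0, iota0, ← Nat.cast_add, ZMod.natCast_eq_natCast_iff, ZMod.val_add, pow_two,
    ← mul_add]
  exact ((Nat.mod_modEq (u.val + v.val) q).mul_left' (c := q))

lemma iota0_inj : Function.Injective (iota0 q) := by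
  intro u v h
  have hq : 0 < q := Nat.pos_of_ne_zero (NeZero.ne q)
  have hu : q * u.val < q ^ 2 := by
    rw [pow_two]; have := ZMod.val_lt u; nlinarith
  have hv : q * v.val < q ^ 2 := by
    rw [pow_two]; have := ZMod.val_lt v; nlinarith
  have h2 := congrArg ZMod.val h
  rw [iota0, iota0, ZMod.val_natCast_of_lt hu, ZMod.val_natCast_of_lt hv] at h2
  exact ZMod.val_injective q (Nat.eq_of_mul_eq_mul_left hq h2)

def eQF : ZMod q → GrpP q (q ^ 2) := fun u => ⟨fun x => if x = 0 then iota0 q u else 0, 0⟩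

@[simp] lemma eQF_s (u : ZMod q) : (eQF q u).s = 0 := rfl

lemma eQF_mul (u v : ZMod q) : eQF q u * eQF q v = eQF q (u + v) := by
  ext x
  · show (eQF q u).f x + (eQF q v).f (x + 0) = (eQF q (u + v)).f x
    rw [add_zero]
    show (if x = 0 then iota0 q u else 0) + (if x = 0 then iota0 q v else 0)
      = if x = 0 then iota0 q (u + v) else 0
    by_cases hx : x = 0 <;> simp [hx, iota0_add]
  · show (0 : ZMod q) + 0 = 0
    simp

lemma eQF_one : eQF q 0 = 1 := by
  ext x
  · show (if x = 0 then iota0 q 0 else 0) = 0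
    have : iota0 q 0 = 0 := by simp [iota0, ZMod.val_zero]
    by_cases hx : x = 0 <;> simp [hx, this]
  · rfl

lemma eQF_inj : Function.Injective (eQF q) := by
  intro u v h
  have := congrArg (fun g : GrpP q (q ^ 2) => g.f 0) h
  simp only [eQF, if_pos rfl] at this
  exact iota0_inj q this

def QsubF : Subgroup (GrpP q (q ^ 2)) where
  carrier := Set.range (eQF q)
  one_mem' := ⟨0, eQF_one q⟩
  mul_mem' := by
    rintro _ _ ⟨u, rfl⟩ ⟨v, rfl⟩
    exact ⟨u + v, (eQF_mul q u v).symm⟩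
  inv_mem' := by
    rintro _ ⟨u, rfl⟩
    refine ⟨-u, ?_⟩
    have : eQF q u * eQF q (-u) = 1 := by rw [eQF_mul, add_neg_cancel, eQF_one]
    rw [eq_comm, inv_eq_iff_mul_eq_one]
    exact this

noncomputable def euF : ZMod q ≃ ↥(QsubF q) :=
  Equiv.ofBijective (fun u => ⟨eQF q u, ⟨u, rfl⟩⟩)
    ⟨fun u v h => eQF_inj q (Subtype.ext_iff.mp h),
     by rintro ⟨x, u, rfl⟩; exact ⟨u, rfl⟩⟩

lemma euF_coe (u : ZMod q) : ((euF q u : ↥(QsubF q)) : GrpP q (q ^ 2)) = eQF q u := rfl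

lemma euF_mul (u v : ZMod q) : euF q (u + v) = euF q u * euF q v :=
  Subtype.ext (eQF_mul q u v).symm

lemma euF_symm_mul (x y : ↥(QsubF q)) :
    (euF q).symm (x * y) = (euF q).symm x + (euF q).symm y := by
  apply (euF q).injective
  rw [euF_mul, Equiv.apply_symm_apply, Equiv.apply_symm_apply, Equiv.apply_symm_apply]

lemma euF_symm_one : (euF q).symm 1 = 0 := by
  have h : euF q 0 = 1 := Subtype.ext (eQF_one q)
  rw [← h, Equiv.symm_apply_apply]

lemma card_QsubF : Nat.card ↥(QsubF q) = q := by
  rw [Nat.card_congr (euF q).symm, Nat.card_zmod]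

lemma psi_eQF (cc : ZMod q → ZMod (q ^ 2)) (u : ZMod q) :
    psiF q (q ^ 2) cc (eQF q u) = ∑ τ : ZMod q, epsC (q ^ 2) (cc τ * iota0 q u) := by
  classical
  rw [psiF, if_pos (eQF_s q u)]
  refine Finset.sum_congr rfl fun τ _ => ?_
  congr 1
  have : ∀ x : ZMod q, cc (x + τ) * (eQF q u).f x
      = if x = 0 then cc (x + τ) * iota0 q u else 0 := by
    intro x
    show cc (x + τ) * (if x = 0 then iota0 q u else 0) = _
    by_cases hx : x = 0 <;> simp [hx]
  rw [Finset.sum_congr rfl fun x _ => this x,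
    Finset.sum_ite_eq' Finset.univ 0 (fun x => cc (x + τ) * iota0 q u)]
  simp

lemma zetaC_sq_pow : (zetaC (q ^ 2)) ^ q = zetaC q := by
  rw [zetaC, zetaC, ← Complex.exp_nat_mul]
  congr 1
  have hq : (q : ℂ) ≠ 0 := Nat.cast_ne_zero.mpr (NeZero.ne q)
  push_cast
  field_simp

lemma epsC_eval (dv : ℕ) (τ u : ZMod q) :
    epsC (q ^ 2) (((dv + q * τ.val : ℕ) : ZMod (q ^ 2)) * iota0 q u)
      = zetaC q ^ (dv * u.val) := by
  rw [iota0, ← Nat.cast_mul, epsC_natCast,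
    show (dv + q * τ.val) * (q * u.val) = q * (dv * u.val) + q ^ 2 * (τ.val * u.val) from by ring,
    pow_add, pow_mul (zetaC (q ^ 2)) q, pow_mul (zetaC (q ^ 2)) (q ^ 2), zetaC_pow_self,
    one_pow, mul_one, zetaC_sq_pow]

lemma epsC_mul_cast (dv : ℕ) (u : ZMod q) :
    epsC q ((dv : ZMod q) * u) = zetaC q ^ (dv * u.val) := by
  conv_lhs => rw [← natCast_val_self q u, ← Nat.cast_mul, epsC_natCast]

lemma isIrrChar_phiQ (t : ZMod q) :
    IsIrrChar ↥(QsubF q) (fun x => epsC q (t * (euF q).symm x)) := by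
  classical
  haveI : Fintype ↥(QsubF q) := Fintype.ofFinite _
  constructor
  · refine ⟨1, { toFun := fun x => epsC q (t * (euF q).symm x) •
      (LinearMap.id : (Fin 1 → ℂ) →ₗ[ℂ] (Fin 1 → ℂ)), map_one' := ?_, map_mul' := ?_ }, ?_⟩
    · show epsC q (t * (euF q).symm 1) • LinearMap.id = 1
      rw [euF_symm_one, mul_zero, epsC_zero, one_smul]
      rfl
    · intro x y
      try dsimp only
      rw [euF_symm_mul, mul_add, epsC_add]
      refine LinearMap.ext fun v => ?_
      simp [Module.End.mul_apply, smul_smul, mul_comm]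
    · intro g
      show epsC q (t * (euF q).symm g)
        = LinearMap.trace ℂ (Fin 1 → ℂ) (epsC q (t * (euF q).symm g) • LinearMap.id)
      rw [map_smul, LinearMap.trace_id, Module.finrank_fintype_fun_eq_card]
      simp
  · rw [cInner, finsum_eq_sum_of_fintype]
    have h1 : ∀ x : ↥(QsubF q),
        epsC q (t * (euF q).symm x) * (starRingEnd ℂ) (epsC q (t * (euF q).symm x)) = 1 :=
      fun x => epsC_mul_conj q _
    rw [Finset.sum_congr rfl fun x _ => h1 x, Finset.sum_const, Finset.card_univ,
      ← Nat.card_eq_fintype_card, card_QsubF, nsmul_eq_mul, mul_one]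
    have hq : (q : ℂ) ≠ 0 := Nat.cast_ne_zero.mpr (NeZero.ne q)
    field_simp

end QSide

section Bridge
open Finset
variable (q : ℕ) [NeZero q]

def ccF {k : ℕ} (d : Fin q → Fin k) : ZMod q → ZMod (q ^ 2) :=
  fun τ => (((d (jmF q τ) : ℕ) + q * τ.val : ℕ) : ZMod (q ^ 2))

lemma ccF_inj {k : ℕ} (hk : k ≤ q) (d : Fin q → Fin k) : Function.Injective (ccF q d) := by
  intro τ τ' h
  have hq0 : 0 < q := Nat.pos_of_ne_zero (NeZero.ne q)
  have hd1 : (d (jmF q τ) : ℕ) < q := lt_of_lt_of_le (d (jmF q τ)).isLt hk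
  have hd2 : (d (jmF q τ') : ℕ) < q := lt_of_lt_of_le (d (jmF q τ')).isLt hk
  have hlt1 : (d (jmF q τ) : ℕ) + q * τ.val < q ^ 2 := by
    have := ZMod.val_lt τ; rw [pow_two]; nlinarith
  have hlt2 : (d (jmF q τ') : ℕ) + q * τ'.val < q ^ 2 := by
    have := ZMod.val_lt τ'; rw [pow_two]; nlinarith
  have h2 := congrArg ZMod.val h
  simp only [ccF] at h2
  rw [ZMod.val_natCast_of_lt hlt1, ZMod.val_natCast_of_lt hlt2] at h2
  have h3 : ((d (jmF q τ) : ℕ) + q * τ.val) / q = ((d (jmF q τ') : ℕ) + q * τ'.val) / q := by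
    rw [h2]
  rw [Nat.add_mul_div_left _ _ hq0, Nat.add_mul_div_left _ _ hq0,
    Nat.div_eq_of_lt hd1, Nat.div_eq_of_lt hd2] at h3
  exact ZMod.val_injective q (by omega)

lemma psi_eQF_grouped {k : ℕ} (m : Fin k → ℕ)
    (E : (Σ i : Fin k, Fin (m i)) ≃ Fin q) (u : ZMod q) :
    psiF q (q ^ 2) (ccF q (fun j => (E.symm j).1)) (eQF q u)
      = ∑ i : Fin k, (m i : ℂ) * epsC q (((i : ℕ) : ZMod q) * u) := by
  rw [psi_eQF]
  calc ∑ τ : ZMod q, epsC (q ^ 2) (ccF q (fun j => (E.symm j).1) τ * iota0 q u)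
      = ∑ τ : ZMod q, zetaC q ^ (((E.symm (jmF q τ)).1 : ℕ) * u.val) :=
        Finset.sum_congr rfl fun τ _ => epsC_eval q _ τ u
    _ = ∑ j : Fin q, zetaC q ^ (((E.symm j).1 : ℕ) * u.val) :=
        Equiv.sum_comp (finzEquiv q).symm (fun j => zetaC q ^ (((E.symm j).1 : ℕ) * u.val))
    _ = ∑ s : Σ i : Fin k, Fin (m i), zetaC q ^ ((s.1 : ℕ) * u.val) :=
        Equiv.sum_comp E.symm (fun s => zetaC q ^ ((s.1 : ℕ) * u.val))
    _ = ∑ i : Fin k, ∑ _t : Fin (m i), zetaC q ^ ((i : ℕ) * u.val) := by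
        rw [← Finset.univ_sigma_univ, Finset.sum_sigma]
    _ = ∑ i : Fin k, (m i : ℂ) * epsC q (((i : ℕ) : ZMod q) * u) := by
        refine Finset.sum_congr rfl fun i _ => ?_
        rw [Finset.sum_const, Finset.card_univ, Fintype.card_fin, nsmul_eq_mul, epsC_mul_cast]

end Bridge

theorem restriction_with_prescribed_constituents
    (p : ℕ) (hp : p.Prime) (k : ℕ) (hk : 0 < k)
    (n : Fin (k - 1) → ℕ) (hn : ∀ i, 0 < n i)
    (r : ℕ) (hr : 0 < r) (hlt : ∑ i, n i < p ^ r)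
    (m : Fin k → ℕ)
    (hm : ∀ (i : Fin k) (h : (i : ℕ) < k - 1), m i = n ⟨i, h⟩)
    (hmk : m ⟨k - 1, Nat.sub_lt hk Nat.one_pos⟩ = p ^ r - ∑ i, n i) :
    ∃ (P : Type) (_ : Group P) (_ : Finite P), IsPGroup p P ∧
      ∃ (Q : Subgroup P) (ψ : P → ℂ) (φ : Fin k → (↥Q → ℂ)),
        IsIrrChar P ψ ∧
        (∀ i, IsIrrChar ↥Q (φ i)) ∧ Function.Injective φ ∧
        (∀ x : ↥Q, ψ (x : P) = ∑ i : Fin k, (m i : ℂ) * φ i x) ∧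
        (∀ i : Fin k,
          cInner ↥Q (fun x : ↥Q => ψ (x : P)) (φ i) = (m i : ℂ)) := by
  classical
  obtain ⟨k', rfl⟩ : ∃ k', k = k' + 1 := ⟨k - 1, (Nat.succ_pred_eq_of_pos hk).symm⟩
  set q := p ^ r with hqdef
  have hq0 : 0 < q := pow_pos hp.pos r
  haveI : NeZero q := ⟨hq0.ne'⟩
  have hmpos : ∀ i : Fin (k' + 1), 0 < m i := by
    intro i
    rcases lt_or_ge (i : ℕ) k' with h | h
    · have h' : (i : ℕ) < k' + 1 - 1 := h
      rw [hm i h']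
      exact hn _
    · have hiv : (i : ℕ) = k' := le_antisymm (Nat.lt_succ_iff.mp i.isLt) h
      have hi : i = ⟨k' + 1 - 1, Nat.sub_lt hk Nat.one_pos⟩ := Fin.ext (by simpa using hiv)
      rw [hi, hmk]
      omega
  have hsum : ∑ i, m i = q := by
    rw [Fin.sum_univ_castSucc]
    have h2 : m (Fin.last k') = q - ∑ i, n i := by
      have hlast : Fin.last k' = ⟨k' + 1 - 1, Nat.sub_lt hk Nat.one_pos⟩ := Fin.ext (by simp)
      rw [hlast, hmk]
    have h1 : ∀ i : Fin k', m i.castSucc = n ⟨(i : ℕ), i.isLt⟩ := fun i => hm _ _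
    rw [Finset.sum_congr rfl fun i _ => h1 i, h2]
    have h3 : ∑ i : Fin k', n ⟨(i : ℕ), i.isLt⟩ = ∑ i, n i :=
      Finset.sum_congr rfl fun i _ => by congr
    rw [h3]
    omega
  have hk_le : k' + 1 ≤ q := by
    calc k' + 1 = ∑ _i : Fin (k' + 1), 1 := by simp
      _ ≤ ∑ i, m i := Finset.sum_le_sum (fun i _ => hmpos i)
      _ = q := hsum
  have hcard : Fintype.card (Σ i : Fin (k' + 1), Fin (m i)) = q := by
    simp [Fintype.card_sigma, hsum]
  set E := Fintype.equivFinOfCardEq hcard with hE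
  set cc := ccF q (fun j => (E.symm j).1) with hcc
  have hccinj : Function.Injective cc := ccF_inj q hk_le _
  refine ⟨GrpP q (q ^ 2), inferInstance, Finite.of_fintype _, ?_, ?_⟩
  · refine IsPGroup.of_card (n := r * 2 * q + r) ?_
    rw [GrpP.card_grpP]
    rw [show (q ^ 2 : ℕ) = p ^ (r * 2) from by rw [hqdef, ← pow_mul], ← pow_mul, hqdef,
      ← pow_add]
  · refine ⟨QsubF q, psiF q (q ^ 2) cc,
      (fun i => fun x => epsC q (((i : ℕ) : ZMod q) * (euF q).symm x)), ?_, ?_, ?_, ?_, ?_⟩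
    · exact isIrrChar_psi q (q ^ 2) cc hccinj
    · exact fun i => isIrrChar_phiQ q _
    · intro i j h
      have h1 := congrFun h (euF q 1)
      simp only [Equiv.symm_apply_apply, mul_one, epsC_natCast] at h1
      exact Fin.ext ((zetaC_prim q).pow_inj (lt_of_lt_of_le i.isLt hk_le)
        (lt_of_lt_of_le j.isLt hk_le) h1)
    · intro x
      have hx : x = euF q ((euF q).symm x) := ((euF q).apply_symm_apply x).symm
      rw [hx]
      have hcoe : ((euF q ((euF q).symm x) : ↥(QsubF q)) : GrpP q (q ^ 2))
          = eQF q ((euF q).symm x) := rfl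
      rw [hcoe, hcc, psi_eQF_grouped q m E]
      refine Finset.sum_congr rfl fun i _ => ?_
      simp only [Equiv.symm_apply_apply]
    · intro i
      haveI : Fintype ↥(QsubF q) := Fintype.ofFinite _
      rw [cInner, card_QsubF, finsum_eq_sum_of_fintype]
      have hq : (q : ℂ) ≠ 0 := Nat.cast_ne_zero.mpr (NeZero.ne q)
      have hstep : ∑ x : ↥(QsubF q),
          psiF q (q ^ 2) cc (x : GrpP q (q ^ 2))
            * (starRingEnd ℂ) (epsC q (((i : ℕ) : ZMod q) * (euF q).symm x))
          = ∑ u : ZMod q, (∑ j : Fin (k' + 1), (m j : ℂ) * epsC q (((j : ℕ) : ZMod q) * u))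
              * (starRingEnd ℂ) (epsC q (((i : ℕ) : ZMod q) * u)) := by
        rw [← Equiv.sum_comp (euF q) (fun x =>
          psiF q (q ^ 2) cc (x : GrpP q (q ^ 2))
            * (starRingEnd ℂ) (epsC q (((i : ℕ) : ZMod q) * (euF q).symm x)))]
        refine Finset.sum_congr rfl fun u _ => ?_
        rw [Equiv.symm_apply_apply]
        have hcoe : ((euF q u : ↥(QsubF q)) : GrpP q (q ^ 2)) = eQF q u := rfl
        rw [hcoe, hcc, psi_eQF_grouped q m E]
      rw [hstep]
      have hterm : ∀ (j : Fin (k' + 1)) (u : ZMod q),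
          epsC q (((j : ℕ) : ZMod q) * u)
              * (starRingEnd ℂ) (epsC q (((i : ℕ) : ZMod q) * u))
            = epsC q ((((j : ℕ) : ZMod q) - ((i : ℕ) : ZMod q)) * u) := by
        intro j u
        rw [conj_epsC, ← epsC_add]
        congr 1
        ring
      have hswap : ∑ u : ZMod q,
          (∑ j : Fin (k' + 1), (m j : ℂ) * epsC q (((j : ℕ) : ZMod q) * u))
            * (starRingEnd ℂ) (epsC q (((i : ℕ) : ZMod q) * u))
          = ∑ j : Fin (k' + 1), (m j : ℂ) *
              ∑ u : ZMod q, epsC q ((((j : ℕ) : ZMod q) - ((i : ℕ) : ZMod q)) * u) := by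
        have h1 : ∀ u : ZMod q,
            (∑ j : Fin (k' + 1), (m j : ℂ) * epsC q (((j : ℕ) : ZMod q) * u))
              * (starRingEnd ℂ) (epsC q (((i : ℕ) : ZMod q) * u))
            = ∑ j : Fin (k' + 1),
                (m j : ℂ) * epsC q ((((j : ℕ) : ZMod q) - ((i : ℕ) : ZMod q)) * u) := by
          intro u
          rw [Finset.sum_mul]
          refine Finset.sum_congr rfl fun j _ => ?_
          rw [mul_assoc, hterm j u]
        rw [Finset.sum_congr rfl fun u _ => h1 u, Finset.sum_comm]
        refine Finset.sum_congr rfl fun j _ => ?_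
        rw [← Finset.mul_sum]
      rw [hswap]
      have hinner : ∀ j : Fin (k' + 1),
          (∑ u : ZMod q, epsC q ((((j : ℕ) : ZMod q) - ((i : ℕ) : ZMod q)) * u))
            = if j = i then (q : ℂ) else 0 := by
        intro j
        rw [sum_epsC]
        by_cases h : j = i
        · rw [if_pos (by rw [h, sub_self]), if_pos h]
        · rw [if_neg ?_, if_neg h]
          intro hz
          apply h
          have hji : ((j : ℕ) : ZMod q) = ((i : ℕ) : ZMod q) := sub_eq_zero.mp hz
          have h2 := congrArg ZMod.val hji
          rw [ZMod.val_natCast_of_lt (lt_of_lt_of_le j.isLt hk_le),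
            ZMod.val_natCast_of_lt (lt_of_lt_of_le i.isLt hk_le)] at h2
          exact Fin.ext h2
      rw [Finset.sum_congr rfl fun j _ => by rw [hinner j]]
      have hif : ∀ j : Fin (k' + 1),
          (m j : ℂ) * (if j = i then (q : ℂ) else 0)
            = if j = i then (m j : ℂ) * q else 0 := by
        intro j
        split <;> simp
      rw [Finset.sum_congr rfl fun j _ => hif j,
        Finset.sum_ite_eq' Finset.univ i (fun j => (m j : ℂ) * q)]
      simp only [Finset.mem_univ, if_true]
      field_simp
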